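/- Let P and Q be finite log-concave posets. Then the product poset P × Q is log-concave: its layer sizes s_m = |(P×Q)_m| satisfy s_m² ≥ s_{m-1}·s_{m+1} for all m ≥ 1. -/

import Mathlib

/-- The rank of an element of a (finite) poset: the length of the longest
chain strictly below it (equivalently, `r(x) = 0` for minimal `x` and
`r(x) = max {r(y) : y < x} + 1` otherwise). -/
noncomputable def rk {P : Type*} [Preorder P] (x : P) : ℕ :=
  (Order.height x).toNat

/-- The `k`-th layer of a poset: the set of elements of rank `k`. -/
def layerSet (P : Type*) [Preorder P] (k : ℕ) : Set P := {x : P | rk x = k}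

/-- The size of the `k`-th layer. -/
noncomputable def layerCard (P : Type*) [Preorder P] (k : ℕ) : ℕ := (layerSet P k).ncard

/-- A finite poset is LYM if every antichain `A` satisfies
`∑_{x ∈ A} 1 / |P_{r(x)}| ≤ 1`. -/
def IsLYM (P : Type*) [PartialOrder P] [Fintype P] : Prop :=
  ∀ A : Finset P, IsAntichain (· ≤ ·) (A : Set P) →
    ∑ x ∈ A, (1 : ℝ) / layerCard P (rk x) ≤ 1

/-- A poset is log-concave if its layer sizes `p_k` satisfy
`p_k ^ 2 ≥ p_{k-1} * p_{k+1}` for all `k ≥ 1`. -/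
def LayerLogConcave (P : Type*) [Preorder P] : Prop :=
  ∀ k : ℕ, 1 ≤ k → layerCard P (k - 1) * layerCard P (k + 1) ≤ layerCard P k ^ 2

section Aux

open Finset

lemma height_ne_top_of_fintype {P : Type*} [Preorder P] [Fintype P] (x : P) :
    Order.height x ≠ ⊤ := by
  have h : Order.height x ≤ (Fintype.card P : ℕ∞) := by
    apply Order.height_le
    intro p _
    exact_mod_cast p.length_lt_card.le
  exact ne_top_of_le_ne_top (by simp) h


lemma height_prod {P Q : Type*} [PartialOrder P] [PartialOrder Q] [Fintype P] [Fintype Q]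
    (x : P) (y : Q) :
    Order.height ((x, y) : P × Q) = Order.height x + Order.height y := by
  apply le_antisymm
  · -- ≤
    apply Order.height_le
    intro p hp
    have key : ∀ n : ℕ, ∀ p : LTSeries (P × Q), p.length = n →
        (p.length : ℕ∞) ≤ Order.height p.last.1 + Order.height p.last.2 := by
      intro n
      induction n with
      | zero => intro p hp; simp [hp]
      | succ n ih =>
        intro p hp
        have hne : p.length ≠ 0 := by omega
        have hlt : p.eraseLast.last < p.last := p.eraseLast_last_rel_last hne
        have h1 := ih p.eraseLast (by simp [hp])
        have hlen : (p.eraseLast.length : ℕ∞) = (n : ℕ∞) := by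
          norm_cast; simp [hp]
        rw [hlen] at h1
        rw [hp]
        rcases Prod.lt_iff.mp hlt with ⟨h2, h3⟩ | ⟨h2, h3⟩
        · have h4 : Order.height p.eraseLast.last.1 + 1 ≤ Order.height p.last.1 :=
            (ENat.add_one_le_iff (height_ne_top_of_fintype _)).mpr
              (Order.height_strictMono h2 ((height_ne_top_of_fintype _).lt_top))
          have h5 : Order.height p.eraseLast.last.2 ≤ Order.height p.last.2 :=
            Order.height_mono h3
          calc ((n+1 : ℕ) : ℕ∞) = (n : ℕ∞) + 1 := by push_cast; ring
          _ ≤ (Order.height p.eraseLast.last.1 + Order.height p.eraseLast.last.2) + 1 := by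
              gcongr
          _ = (Order.height p.eraseLast.last.1 + 1) + Order.height p.eraseLast.last.2 := by ring
          _ ≤ Order.height p.last.1 + Order.height p.last.2 := by gcongr
        · have h4 : Order.height p.eraseLast.last.2 + 1 ≤ Order.height p.last.2 :=
            (ENat.add_one_le_iff (height_ne_top_of_fintype _)).mpr
              (Order.height_strictMono h3 ((height_ne_top_of_fintype _).lt_top))
          have h5 : Order.height p.eraseLast.last.1 ≤ Order.height p.last.1 :=
            Order.height_mono h2
          calc ((n+1 : ℕ) : ℕ∞) = (n : ℕ∞) + 1 := by push_cast; ring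
          _ ≤ (Order.height p.eraseLast.last.1 + Order.height p.eraseLast.last.2) + 1 := by
              gcongr
          _ = Order.height p.eraseLast.last.1 + (Order.height p.eraseLast.last.2 + 1) := by ring
          _ ≤ Order.height p.last.1 + Order.height p.last.2 := by gcongr
    have := key p.length p rfl
    rwa [hp] at this
  · -- ≥
    obtain ⟨nx, hnx⟩ := Option.ne_none_iff_exists'.mp (height_ne_top_of_fintype x)
    obtain ⟨ny, hny⟩ := Option.ne_none_iff_exists'.mp (height_ne_top_of_fintype y)
    obtain ⟨p, hpl, hplen⟩ := Order.exists_series_of_height_eq_coe x hnx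
    obtain ⟨q, hql, hqlen⟩ := Order.exists_series_of_height_eq_coe y hny
    have hmono1 : StrictMono (fun a : P => ((a, q.head) : P × Q)) := by
      intro a b hab
      exact Prod.mk_lt_mk_iff_left.mpr hab
    have hmono2 : StrictMono (fun b : Q => ((x, b) : P × Q)) := by
      intro a b hab
      exact Prod.mk_lt_mk_iff_right.mpr hab
    set p1 := p.map _ hmono1 with hp1
    set p2 := q.map _ hmono2 with hp2
    have hconn : p1.last = p2.head := by
      simp [hp1, hp2, hpl]
    have hs := Order.length_le_height_last (p := p1.smash p2 hconn)
    have hlast : (p1.smash p2 hconn).last = (x, y) := by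
      simp [hp2, hql]
    have hlen : (p1.smash p2 hconn).length = nx + ny := by
      simp [RelSeries.smash, hp1, hp2, hplen, hqlen]
    rw [hlast, hlen] at hs
    rw [hnx, hny]
    exact_mod_cast hs




lemma rk_prod {P Q : Type*} [PartialOrder P] [PartialOrder Q] [Fintype P] [Fintype Q]
    (x : P) (y : Q) : rk ((x, y) : P × Q) = rk x + rk y := by
  unfold rk
  rw [height_prod, ENat.toNat_add (height_ne_top_of_fintype x) (height_ne_top_of_fintype y)]

open Finset in
lemma layerCard_eq_filter (P : Type*) [Preorder P] [Fintype P] (k : ℕ) :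
    layerCard P k = (Finset.univ.filter (fun x : P => rk x = k)).card := by
  classical
  rw [layerCard, layerSet, Set.ncard_eq_toFinset_card']
  congr 1
  ext x
  simp

open Finset in
lemma layerCard_prod {P Q : Type*} [PartialOrder P] [PartialOrder Q] [Fintype P] [Fintype Q]
    (n : ℕ) :
    layerCard (P × Q) n = ∑ k ∈ Finset.range (n+1), layerCard P k * layerCard Q (n - k) := by
  classical
  rw [layerCard_eq_filter]
  have hset : (Finset.univ.filter (fun z : P × Q => rk z = n)) =
      (Finset.range (n+1)).biUnion (fun k =>
        (Finset.univ.filter (fun x : P => rk x = k)) ×ˢ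
        (Finset.univ.filter (fun y : Q => rk y = n - k))) := by
    ext ⟨x, y⟩
    simp only [Finset.mem_filter, Finset.mem_univ, true_and, Finset.mem_biUnion,
      Finset.mem_range, Finset.mem_product, rk_prod]
    constructor
    · intro h
      exact ⟨rk x, by omega, rfl, by omega⟩
    · rintro ⟨k, hk, h1, h2⟩
      omega
  rw [hset, Finset.card_biUnion]
  · apply Finset.sum_congr rfl
    intro k _
    rw [Finset.card_product, layerCard_eq_filter, layerCard_eq_filter]
  · intro k _ l _ hkl
    simp only [Finset.disjoint_left]
    rintro ⟨x, y⟩ hx hy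
    simp only [Finset.mem_product, Finset.mem_filter] at hx hy
    omega

lemma layerCard_no_internal_zero {P : Type*} [PartialOrder P] [Fintype P] (k : ℕ)
    (h : layerCard P k = 0) : layerCard P (k+1) = 0 := by
  classical
  by_contra hne
  -- there is an element of rank k+1
  have : (layerSet P (k+1)).Nonempty := by
    rw [Set.nonempty_iff_ne_empty]
    intro he
    exact hne (by simp [layerCard, he])
  obtain ⟨x, hx⟩ := this
  have hh : Order.height x = (k+1 : ℕ) := by
    have := height_ne_top_of_fintype x
    have hx' : (Order.height x).toNat = k + 1 := hx
    rw [← hx']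
    exact (ENat.coe_toNat this).symm
  obtain ⟨p, hpl, hplen⟩ := Order.exists_series_of_height_eq_coe x hh
  have hk := Order.height_eq_index_of_length_eq_height_last
    (p := p) (by rw [hpl, hh, hplen]) ⟨k, by omega⟩
  have : p ⟨k, by omega⟩ ∈ layerSet P k := by
    simp only [layerSet, Set.mem_setOf_eq, rk]
    rw [hk]
    simp
  have hne' : (layerSet P k).Nonempty := ⟨_, this⟩
  rw [layerCard] at h
  exact (Set.nonempty_iff_ne_empty.mp hne') (by
    have := Set.ncard_eq_zero (s := layerSet P k) (Set.toFinite _)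
    exact this.mp h)


-- split a ℤ-interval sum
lemma sum_Ico_split (F : ℤ → ℤ) {a c b : ℤ} (h1 : a ≤ c) (h2 : c ≤ b) :
    ∑ k ∈ Ico a b, F k = (∑ k ∈ Ico a c, F k) + ∑ k ∈ Ico c b, F k := by
  rw [← Finset.sum_union (Finset.Ico_disjoint_Ico_consecutive a c b),
    Finset.Ico_union_Ico_eq_Ico h1 h2]

-- extend a ℤ-interval sum over zero terms
lemma sum_Ico_ext (F : ℤ → ℤ) {a a' b b' : ℤ} (ha : a' ≤ a) (hb : b ≤ b')
    (h : ∀ k, a' ≤ k → k < b' → (k < a ∨ b ≤ k) → F k = 0) :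
    ∑ k ∈ Ico a b, F k = ∑ k ∈ Ico a' b', F k := by
  apply Finset.sum_subset (Finset.Ico_subset_Ico ha hb)
  intro x hx hnx
  simp only [Finset.mem_Ico] at hx hnx
  exact h x hx.1 hx.2 (by omega)

lemma sum_Ico_shift (F : ℤ → ℤ) (a b c : ℤ) :
    ∑ k ∈ Ico (a+c) (b+c), F k = ∑ k ∈ Ico a b, F (k+c) := by
  rw [← Finset.sum_Ico_add']

lemma Ico_singleton (c : ℤ) : Ico c (c+1) = {c} := by
  ext x; simp [Finset.mem_Ico]; omega

-- triangle swaps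
lemma tri_swap_lower (a b : ℤ) (u : ℤ → ℤ → ℤ) :
    ∑ k ∈ Ico a b, ∑ l ∈ Ico a k, u k l = ∑ l ∈ Ico a b, ∑ k ∈ Ico (l+1) b, u k l := by
  apply Finset.sum_comm'
  intro x y
  simp only [Finset.mem_Ico]
  omega

lemma tri_swap_upper (a b : ℤ) (u : ℤ → ℤ → ℤ) :
    ∑ k ∈ Ico a b, ∑ l ∈ Ico k b, u k l = ∑ l ∈ Ico a b, ∑ k ∈ Ico a (l+1), u k l := by
  apply Finset.sum_comm'
  intro x y
  simp only [Finset.mem_Ico]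
  omega

lemma spread_lemma (f : ℤ → ℤ) (hf0 : ∀ n : ℤ, n < 0 → f n = 0) (hnn : ∀ n, 0 ≤ f n)
    (hlc : ∀ i : ℤ, f (i-1) * f (i+1) ≤ f i * f i)
    (hiz : ∀ i : ℤ, 0 ≤ i → f i = 0 → f (i+1) = 0) :
    ∀ i j : ℤ, i ≤ j → f (i-1) * f (j+1) ≤ f i * f j := by
  have key : ∀ n : ℕ, ∀ i j : ℤ, i ≤ j → j - i = n → f (i-1) * f (j+1) ≤ f i * f j := by
    intro n
    induction n with
    | zero =>
      intro i j hij h0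
      have : j = i := by omega
      subst this
      exact hlc _
    | succ n ih =>
      intro i j hij h0
      have hij' : i ≤ j - 1 := by omega
      by_cases hj : j ≤ 0
      · have : i - 1 < 0 := by omega
        rw [hf0 _ this, zero_mul]
        exact mul_nonneg (hnn _) (hnn _)
      · push_neg at hj
        by_cases hfj : f j = 0
        · rw [show j + 1 = j + 1 from rfl, hiz j (by omega) hfj, mul_zero]
          exact mul_nonneg (hnn _) (hnn _)
        · have hfj1 : f (j-1) ≠ 0 := by
            intro h
            exact hfj (by simpa using hiz (j-1) (by omega) h)
          have hpos : 0 < f (j-1) * f j :=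
            mul_pos (lt_of_le_of_ne (hnn _) (Ne.symm hfj1)) (lt_of_le_of_ne (hnn _) (Ne.symm hfj))
          have h1 : f (i-1) * f ((j-1)+1) ≤ f i * f (j-1) := ih i (j-1) hij' (by omega)
          rw [show j - 1 + 1 = j by ring] at h1
          have h2 := hlc j
          rw [← mul_le_mul_iff_of_pos_right hpos]
          calc f (i-1) * f (j+1) * (f (j-1) * f j)
              = (f (i-1) * f j) * (f (j-1) * f (j+1)) := by ring
            _ ≤ (f i * f (j-1)) * (f j * f j) := by
                apply mul_le_mul h1 h2 (mul_nonneg (hnn _) (hnn _))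
                  (mul_nonneg (hnn _) (hnn _))
            _ = f i * f j * (f (j-1) * f j) := by ring
  intro i j hij
  exact key (j - i).toNat i j hij (by omega)

lemma conv_lc (f g : ℤ → ℤ)
    (hf0 : ∀ n : ℤ, n < 0 → f n = 0) (hg0 : ∀ n : ℤ, n < 0 → g n = 0)
    (hfnn : ∀ n, 0 ≤ f n) (hgnn : ∀ n, 0 ≤ g n)
    (hfs : ∀ i j : ℤ, i ≤ j → f (i-1) * f (j+1) ≤ f i * f j)
    (hgs : ∀ i j : ℤ, i ≤ j → g (i-1) * g (j+1) ≤ g i * g j)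
    (m : ℤ) :
    (∑ k ∈ Ico (-1:ℤ) (m+3), f k * g (m-1-k)) * (∑ k ∈ Ico (-1:ℤ) (m+3), f k * g (m+1-k))
      ≤ (∑ k ∈ Ico (-1:ℤ) (m+3), f k * g (m-k)) ^ 2 := by
  -- inner-sum transformations (for a fixed k in range)
  have inner1 : ∀ k : ℤ, -1 ≤ k → k < m + 3 →
      ∑ l ∈ Ico (k+1) (m+3), f (l-1) * g (m+1-l) = ∑ l ∈ Ico k (m+3), f l * g (m-l) := by
    intro k hk1 hk2
    calc ∑ l ∈ Ico (k+1) (m+3), f (l-1) * g (m+1-l)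
        = ∑ l ∈ Ico k (m+2), f ((l+1)-1) * g (m+1-(l+1)) := by
          rw [show (m+3:ℤ) = m+2+1 from by ring]
          exact sum_Ico_shift (fun l => f (l-1) * g (m+1-l)) k (m+2) 1
      _ = ∑ l ∈ Ico k (m+2), f l * g (m-l) := by
          apply Finset.sum_congr rfl
          intro l _
          rw [show (l+1)-1 = l from by ring, show m+1-(l+1) = m-l from by ring]
      _ = ∑ l ∈ Ico k (m+3), f l * g (m-l) := by
          apply sum_Ico_ext _ (le_refl k) (by omega)
          intro l _ _ hl
          rw [hg0 (m-l) (by omega), mul_zero]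
  have inner3 : ∀ k : ℤ, -1 ≤ k → k < m + 3 →
      ∑ l ∈ Ico (k+1) (m+3), f (l-1) * g (m-l) = ∑ l ∈ Ico k (m+3), f l * g (m-1-l) := by
    intro k hk1 hk2
    calc ∑ l ∈ Ico (k+1) (m+3), f (l-1) * g (m-l)
        = ∑ l ∈ Ico k (m+2), f ((l+1)-1) * g (m-(l+1)) := by
          rw [show (m+3:ℤ) = m+2+1 from by ring]
          exact sum_Ico_shift (fun l => f (l-1) * g (m-l)) k (m+2) 1
      _ = ∑ l ∈ Ico k (m+2), f l * g (m-1-l) := by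
          apply Finset.sum_congr rfl
          intro l _
          rw [show (l+1)-1 = l from by ring, show m-(l+1) = m-1-l from by ring]
      _ = ∑ l ∈ Ico k (m+3), f l * g (m-1-l) := by
          apply sum_Ico_ext _ (le_refl k) (by omega)
          intro l _ _ hl
          rw [hg0 (m-1-l) (by omega), mul_zero]
  -- splitting off the first term of an upper tail sum
  have split_tail : ∀ (F : ℤ → ℤ), F (m+3) = 0 → ∀ k : ℤ, -1 ≤ k → k < m + 3 →
      ∑ l ∈ Ico (k+1) (m+3), F l = F (k+1) + ∑ l ∈ Ico (k+2) (m+3), F l := by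
    intro F hF k hk1 hk2
    have e1 : ∑ l ∈ Ico (k+1) (m+3), F l = ∑ l ∈ Ico (k+1) (m+4), F l := by
      apply sum_Ico_ext _ (le_refl _) (by omega)
      intro l _ _ hl
      have : l = m + 3 := by omega
      rw [this, hF]
    have e2 : ∑ l ∈ Ico (k+2) (m+3), F l = ∑ l ∈ Ico (k+2) (m+4), F l := by
      apply sum_Ico_ext _ (le_refl _) (by omega)
      intro l _ _ hl
      have : l = m + 3 := by omega
      rw [this, hF]
    rw [e1, e2, sum_Ico_split F (show (k+1:ℤ) ≤ k+2 by omega) (by omega),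
      show (k+2:ℤ) = (k+1)+1 from by ring, Ico_singleton, Finset.sum_singleton]
  -- names for the four cross sums
  set S1 := ∑ k ∈ Ico (-1:ℤ) (m+3), (f k * g (m-k)) * ∑ l ∈ Ico k (m+3), f l * g (m-l) with hS1
  set S2 := ∑ k ∈ Ico (-1:ℤ) (m+3), (f k * g (m-1-k)) * ∑ l ∈ Ico (k+2) (m+3), f l * g (m+1-l) with hS2
  set S3 := ∑ k ∈ Ico (-1:ℤ) (m+3), (f k * g (m+1-k)) * ∑ l ∈ Ico k (m+3), f l * g (m-1-l) with hS3
  set S4 := ∑ k ∈ Ico (-1:ℤ) (m+3), (f k * g (m-k)) * ∑ l ∈ Ico (k+2) (m+3), f l * g (m-l) with hS4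
  set D := ∑ k ∈ Ico (-1:ℤ) (m+3), ∑ l ∈ Ico (k+1) (m+3),
      (f k * f (l-1) - f (k-1) * f l) * (g (m-k) * g (m+1-l) - g (m+1-k) * g (m-l)) with hD
  -- D is nonnegative
  have hDnn : 0 ≤ D := by
    rw [hD]
    apply Finset.sum_nonneg
    intro k hk
    apply Finset.sum_nonneg
    intro l hl
    rw [Finset.mem_Ico] at hk hl
    apply mul_nonneg
    · rw [sub_nonneg]
      have h := hfs k (l-1) (by omega)
      rw [show l-1+1 = l from by ring] at h
      calc f (k-1) * f l = f (k-1) * f (l-1+1) := by rw [show l-1+1 = l from by ring]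
        _ ≤ f k * f (l-1) := hfs k (l-1) (by omega)
    · rw [sub_nonneg]
      have h := hgs (m+1-l) (m-k) (by omega)
      rw [show m+1-l-1 = m-l from by ring, show m-k+1 = m+1-k from by ring] at h
      calc g (m+1-k) * g (m-l) = g (m-l) * g (m+1-k) := by ring
        _ ≤ g (m+1-l) * g (m-k) := h
        _ = g (m-k) * g (m+1-l) := by ring
  -- decomposition of D
  have hDsplit : D = S1 - S2 - S3 + S4 := by
    have hEexp : D = (∑ k ∈ Ico (-1:ℤ) (m+3), (f k * g (m-k)) * ∑ l ∈ Ico k (m+3), f l * g (m-l))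
        - (∑ k ∈ Ico (-1:ℤ) (m+3), (f (k-1) * g (m-k)) * ∑ l ∈ Ico (k+1) (m+3), f l * g (m+1-l))
        - (∑ k ∈ Ico (-1:ℤ) (m+3), (f k * g (m+1-k)) * ∑ l ∈ Ico k (m+3), f l * g (m-1-l))
        + (∑ k ∈ Ico (-1:ℤ) (m+3), (f (k-1) * g (m+1-k)) * ∑ l ∈ Ico (k+1) (m+3), f l * g (m-l)) := by
      rw [hD, ← Finset.sum_sub_distrib, ← Finset.sum_sub_distrib, ← Finset.sum_add_distrib]
      apply Finset.sum_congr rfl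
      intro k hk
      rw [Finset.mem_Ico] at hk
      have e1 : (f k * g (m-k)) * ∑ l ∈ Ico k (m+3), f l * g (m-l)
          = ∑ l ∈ Ico (k+1) (m+3), (f k * f (l-1)) * (g (m-k) * g (m+1-l)) := by
        rw [← inner1 k (by omega) (by omega), Finset.mul_sum]
        apply Finset.sum_congr rfl
        intro l _
        ring
      have e3 : (f k * g (m+1-k)) * ∑ l ∈ Ico k (m+3), f l * g (m-1-l)
          = ∑ l ∈ Ico (k+1) (m+3), (f k * f (l-1)) * (g (m+1-k) * g (m-l)) := by
        rw [← inner3 k (by omega) (by omega), Finset.mul_sum]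
        apply Finset.sum_congr rfl
        intro l _
        ring
      have e2 : (f (k-1) * g (m-k)) * ∑ l ∈ Ico (k+1) (m+3), f l * g (m+1-l)
          = ∑ l ∈ Ico (k+1) (m+3), (f (k-1) * f l) * (g (m-k) * g (m+1-l)) := by
        rw [Finset.mul_sum]
        apply Finset.sum_congr rfl
        intro l _
        ring
      have e4 : (f (k-1) * g (m+1-k)) * ∑ l ∈ Ico (k+1) (m+3), f l * g (m-l)
          = ∑ l ∈ Ico (k+1) (m+3), (f (k-1) * f l) * (g (m+1-k) * g (m-l)) := by
        rw [Finset.mul_sum]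
        apply Finset.sum_congr rfl
        intro l _
        ring
      rw [e1, e2, e3, e4, ← Finset.sum_sub_distrib, ← Finset.sum_sub_distrib,
        ← Finset.sum_add_distrib]
      apply Finset.sum_congr rfl
      intro l _
      ring
    -- now shift the outer variable in the second and fourth sums
    have shift2 : (∑ k ∈ Ico (-1:ℤ) (m+3), (f (k-1) * g (m-k)) * ∑ l ∈ Ico (k+1) (m+3), f l * g (m+1-l)) = S2 := by
      calc (∑ k ∈ Ico (-1:ℤ) (m+3), (f (k-1) * g (m-k)) * ∑ l ∈ Ico (k+1) (m+3), f l * g (m+1-l))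
          = ∑ k ∈ Ico (-2:ℤ) (m+2), (f (k+1-1) * g (m-(k+1))) * ∑ l ∈ Ico (k+1+1) (m+3), f l * g (m+1-l) := by
            rw [show (-1:ℤ) = -2+1 from by ring, show (m+3:ℤ) = m+2+1 from by ring]
            exact sum_Ico_shift _ (-2) (m+2) 1
        _ = ∑ k ∈ Ico (-2:ℤ) (m+2), (f k * g (m-1-k)) * ∑ l ∈ Ico (k+2) (m+3), f l * g (m+1-l) := by
            apply Finset.sum_congr rfl
            intro k _
            rw [show (k+1-1:ℤ) = k from by ring, show m-(k+1) = m-1-k from by ring,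
              show (k+1+1:ℤ) = k+2 from by ring]
        _ = ∑ k ∈ Ico (-2:ℤ) (m+3), (f k * g (m-1-k)) * ∑ l ∈ Ico (k+2) (m+3), f l * g (m+1-l) := by
            apply sum_Ico_ext _ (le_refl _) (by omega)
            intro k _ _ hk
            rw [hg0 (m-1-k) (by omega), mul_zero, zero_mul]
        _ = S2 := by
            rw [hS2]
            symm
            apply sum_Ico_ext _ (by omega) (le_refl _)
            intro k _ _ hk
            rw [hf0 k (by omega), zero_mul, zero_mul]
    have shift4 : (∑ k ∈ Ico (-1:ℤ) (m+3), (f (k-1) * g (m+1-k)) * ∑ l ∈ Ico (k+1) (m+3), f l * g (m-l)) = S4 := by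
      calc (∑ k ∈ Ico (-1:ℤ) (m+3), (f (k-1) * g (m+1-k)) * ∑ l ∈ Ico (k+1) (m+3), f l * g (m-l))
          = ∑ k ∈ Ico (-2:ℤ) (m+2), (f (k+1-1) * g (m+1-(k+1))) * ∑ l ∈ Ico (k+1+1) (m+3), f l * g (m-l) := by
            rw [show (-1:ℤ) = -2+1 from by ring, show (m+3:ℤ) = m+2+1 from by ring]
            exact sum_Ico_shift _ (-2) (m+2) 1
        _ = ∑ k ∈ Ico (-2:ℤ) (m+2), (f k * g (m-k)) * ∑ l ∈ Ico (k+2) (m+3), f l * g (m-l) := by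
            apply Finset.sum_congr rfl
            intro k _
            rw [show (k+1-1:ℤ) = k from by ring, show m+1-(k+1) = m-k from by ring,
              show (k+1+1:ℤ) = k+2 from by ring]
        _ = ∑ k ∈ Ico (-2:ℤ) (m+3), (f k * g (m-k)) * ∑ l ∈ Ico (k+2) (m+3), f l * g (m-l) := by
            apply sum_Ico_ext _ (le_refl _) (by omega)
            intro k _ _ hk
            rw [hg0 (m-k) (by omega), mul_zero, zero_mul]
        _ = S4 := by
            rw [hS4]
            symm
            apply sum_Ico_ext _ (by omega) (le_refl _)
            intro k _ _ hk
            rw [hf0 k (by omega), zero_mul, zero_mul]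
    rw [hEexp, shift2, shift4, hS1, hS3]
  -- square decomposition
  have hsq : (∑ k ∈ Ico (-1:ℤ) (m+3), f k * g (m-k)) ^ 2
      = S1 + S4 + ∑ k ∈ Ico (-1:ℤ) (m+3), (f k * g (m-k)) * (f (k+1) * g (m-(k+1))) := by
    rw [sq, Finset.sum_mul]
    have step1 : ∑ k ∈ Ico (-1:ℤ) (m+3), (f k * g (m-k)) * (∑ l ∈ Ico (-1:ℤ) (m+3), f l * g (m-l))
        = ∑ k ∈ Ico (-1:ℤ) (m+3), ((f k * g (m-k)) * ∑ l ∈ Ico (-1:ℤ) k, f l * g (m-l)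
            + (f k * g (m-k)) * ∑ l ∈ Ico k (m+3), f l * g (m-l)) := by
      apply Finset.sum_congr rfl
      intro k hk
      rw [Finset.mem_Ico] at hk
      rw [sum_Ico_split (fun l => f l * g (m-l)) (show (-1:ℤ) ≤ k by omega) (by omega), mul_add]
    rw [step1, Finset.sum_add_distrib]
    have hLower : ∑ k ∈ Ico (-1:ℤ) (m+3), (f k * g (m-k)) * ∑ l ∈ Ico (-1:ℤ) k, f l * g (m-l)
        = ∑ k ∈ Ico (-1:ℤ) (m+3), (f k * g (m-k)) * ∑ l ∈ Ico (k+1) (m+3), f l * g (m-l) := by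
      calc ∑ k ∈ Ico (-1:ℤ) (m+3), (f k * g (m-k)) * ∑ l ∈ Ico (-1:ℤ) k, f l * g (m-l)
          = ∑ k ∈ Ico (-1:ℤ) (m+3), ∑ l ∈ Ico (-1:ℤ) k, (f k * g (m-k)) * (f l * g (m-l)) := by
            apply Finset.sum_congr rfl
            intro k _
            rw [Finset.mul_sum]
        _ = ∑ l ∈ Ico (-1:ℤ) (m+3), ∑ k ∈ Ico (l+1) (m+3), (f k * g (m-k)) * (f l * g (m-l)) :=
            tri_swap_lower (-1) (m+3) (fun k l => (f k * g (m-k)) * (f l * g (m-l)))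
        _ = ∑ l ∈ Ico (-1:ℤ) (m+3), (f l * g (m-l)) * ∑ k ∈ Ico (l+1) (m+3), f k * g (m-k) := by
            apply Finset.sum_congr rfl
            intro l _
            rw [Finset.mul_sum]
            apply Finset.sum_congr rfl
            intro k _
            ring
    rw [hLower]
    have hUpper : ∑ k ∈ Ico (-1:ℤ) (m+3), (f k * g (m-k)) * ∑ l ∈ Ico (k+1) (m+3), f l * g (m-l)
        = (∑ k ∈ Ico (-1:ℤ) (m+3), (f k * g (m-k)) * (f (k+1) * g (m-(k+1)))) + S4 := by
      rw [hS4, ← Finset.sum_add_distrib]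
      apply Finset.sum_congr rfl
      intro k hk
      rw [Finset.mem_Ico] at hk
      rw [split_tail (fun l => f l * g (m-l))
        (by show f (m+3) * g (m-(m+3)) = 0; rw [hg0 (m-(m+3)) (by omega), mul_zero]) k (by omega) (by omega), mul_add]
    rw [hUpper, hS1]
    ring
  -- product decomposition
  have hprod : (∑ k ∈ Ico (-1:ℤ) (m+3), f k * g (m-1-k)) * (∑ k ∈ Ico (-1:ℤ) (m+3), f k * g (m+1-k))
      = S3 + S2 + ∑ k ∈ Ico (-1:ℤ) (m+3), (f k * g (m-1-k)) * (f (k+1) * g (m+1-(k+1))) := by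
    rw [Finset.sum_mul]
    have step1 : ∑ k ∈ Ico (-1:ℤ) (m+3), (f k * g (m-1-k)) * (∑ l ∈ Ico (-1:ℤ) (m+3), f l * g (m+1-l))
        = ∑ k ∈ Ico (-1:ℤ) (m+3), ((f k * g (m-1-k)) * ∑ l ∈ Ico (-1:ℤ) (k+1), f l * g (m+1-l)
            + (f k * g (m-1-k)) * ∑ l ∈ Ico (k+1) (m+3), f l * g (m+1-l)) := by
      apply Finset.sum_congr rfl
      intro k hk
      rw [Finset.mem_Ico] at hk
      rw [sum_Ico_split (fun l => f l * g (m+1-l)) (show (-1:ℤ) ≤ k+1 by omega) (by omega), mul_add]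
    rw [step1, Finset.sum_add_distrib]
    have hP1 : ∑ k ∈ Ico (-1:ℤ) (m+3), (f k * g (m-1-k)) * ∑ l ∈ Ico (-1:ℤ) (k+1), f l * g (m+1-l)
        = S3 := by
      rw [hS3]
      calc ∑ k ∈ Ico (-1:ℤ) (m+3), (f k * g (m-1-k)) * ∑ l ∈ Ico (-1:ℤ) (k+1), f l * g (m+1-l)
          = ∑ k ∈ Ico (-1:ℤ) (m+3), ∑ l ∈ Ico (-1:ℤ) (k+1), (f l * g (m+1-l)) * (f k * g (m-1-k)) := by
            apply Finset.sum_congr rfl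
            intro k _
            rw [Finset.mul_sum]
            apply Finset.sum_congr rfl
            intro l _
            ring
        _ = ∑ k ∈ Ico (-1:ℤ) (m+3), ∑ l ∈ Ico k (m+3), (f k * g (m+1-k)) * (f l * g (m-1-l)) := by
            rw [← tri_swap_upper (-1) (m+3) (fun k l => (f k * g (m+1-k)) * (f l * g (m-1-l)))]
        _ = ∑ k ∈ Ico (-1:ℤ) (m+3), (f k * g (m+1-k)) * ∑ l ∈ Ico k (m+3), f l * g (m-1-l) := by
            apply Finset.sum_congr rfl
            intro k _
            rw [Finset.mul_sum]
    have hP2 : ∑ k ∈ Ico (-1:ℤ) (m+3), (f k * g (m-1-k)) * ∑ l ∈ Ico (k+1) (m+3), f l * g (m+1-l)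
        = (∑ k ∈ Ico (-1:ℤ) (m+3), (f k * g (m-1-k)) * (f (k+1) * g (m+1-(k+1)))) + S2 := by
      rw [hS2, ← Finset.sum_add_distrib]
      apply Finset.sum_congr rfl
      intro k hk
      rw [Finset.mem_Ico] at hk
      rw [split_tail (fun l => f l * g (m+1-l))
        (by show f (m+3) * g (m+1-(m+3)) = 0; rw [hg0 (m+1-(m+3)) (by omega), mul_zero]) k (by omega) (by omega), mul_add]
    rw [hP1, hP2]
    ring
  -- the two diagonal sums agree
  have hdiag : ∑ k ∈ Ico (-1:ℤ) (m+3), (f k * g (m-1-k)) * (f (k+1) * g (m+1-(k+1)))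
      = ∑ k ∈ Ico (-1:ℤ) (m+3), (f k * g (m-k)) * (f (k+1) * g (m-(k+1))) := by
    apply Finset.sum_congr rfl
    intro k _
    rw [show m+1-(k+1) = m-k from by ring, show m-(k+1) = m-1-k from by ring]
    ring
  rw [hsq, hprod, hdiag]
  linarith [hDnn, hDsplit]




lemma layer_sum_eq {P Q : Type*} [Fintype P] [PartialOrder P] [Fintype Q] [PartialOrder Q]
    (n : ℕ) (B : ℤ) (hB : (n : ℤ) < B) :
    ∑ k ∈ Ico (-1 : ℤ) B,
      (if 0 ≤ k then (layerCard P k.toNat : ℤ) else 0) *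
      (if 0 ≤ (n : ℤ) - k then (layerCard Q ((n : ℤ) - k).toNat : ℤ) else 0)
      = (layerCard (P × Q) n : ℤ) := by
  classical
  rw [layerCard_prod (P := P) (Q := Q) n]
  push_cast
  rw [show ∑ k ∈ Finset.range (n+1), (layerCard P k : ℤ) * (layerCard Q (n - k) : ℤ)
      = ∑ k ∈ Finset.range (n+1),
        (if 0 ≤ ((k : ℤ)) then (layerCard P ((k : ℤ)).toNat : ℤ) else 0) *
        (if 0 ≤ (n : ℤ) - (k : ℤ) then (layerCard Q ((n : ℤ) - (k : ℤ)).toNat : ℤ) else 0) from ?_]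
  · symm
    have hrange : ∑ k ∈ Ico (-1 : ℤ) B,
        (if 0 ≤ k then (layerCard P k.toNat : ℤ) else 0) *
        (if 0 ≤ (n : ℤ) - k then (layerCard Q ((n : ℤ) - k).toNat : ℤ) else 0)
        = ∑ k ∈ Ico (0 : ℤ) ((n : ℤ)+1),
        (if 0 ≤ k then (layerCard P k.toNat : ℤ) else 0) *
        (if 0 ≤ (n : ℤ) - k then (layerCard Q ((n : ℤ) - k).toNat : ℤ) else 0) := by
      symm
      apply sum_Ico_ext _ (by omega) (by omega)
      intro k _ _ hk
      rcases hk with hk | hk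
      · rw [if_neg (by omega), zero_mul]
      · rw [if_neg (show ¬ (0 ≤ (n:ℤ) - k) by omega), mul_zero]
    rw [hrange]
    symm
    apply Finset.sum_nbij' (fun k : ℤ => k.toNat) (fun k : ℕ => (k : ℤ))
    · intro a ha
      simp only [Finset.mem_Ico] at ha
      simp only [Finset.mem_range]
      omega
    · intro a ha
      simp only [Finset.mem_range] at ha
      simp only [Finset.mem_Ico]
      omega
    · intro a ha
      simp only [Finset.mem_Ico] at ha
      omega
    · intro a ha
      simp only [Int.toNat_natCast]
    · intro a ha
      simp only [Finset.mem_Ico] at ha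
      rw [show ((a.toNat : ℤ)) = a from by omega]
  · apply Finset.sum_congr rfl
    intro k hk
    simp only [Finset.mem_range] at hk
    rw [if_pos (by positivity), if_pos (by omega), Int.toNat_natCast,
      show (((n : ℤ)) - (k : ℤ)).toNat = n - k from by omega]

/-- If `P` and `Q` are finite log-concave posets, then the product poset `P × Q`
is log-concave: its layer sizes `s_m` satisfy `s_m ^ 2 ≥ s_{m-1} * s_{m+1}` for `m ≥ 1`. -/
theorem product_of_logConcave_is_logConcave {P Q : Type*}
    [Fintype P] [PartialOrder P] [Fintype Q] [PartialOrder Q]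
    (hPlc : LayerLogConcave P) (hQlc : LayerLogConcave Q) :
    LayerLogConcave (P × Q) := by
  classical
  intro n hn
  set f : ℤ → ℤ := fun k => if 0 ≤ k then (layerCard P k.toNat : ℤ) else 0 with hf
  set g : ℤ → ℤ := fun k => if 0 ≤ k then (layerCard Q k.toNat : ℤ) else 0 with hg
  have hf0 : ∀ k : ℤ, k < 0 → f k = 0 := fun k hk => if_neg (by omega)
  have hg0 : ∀ k : ℤ, k < 0 → g k = 0 := fun k hk => if_neg (by omega)
  have hfnn : ∀ k, 0 ≤ f k := by
    intro k
    rw [hf]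
    dsimp only
    split <;> positivity
  have hgnn : ∀ k, 0 ≤ g k := by
    intro k
    rw [hg]
    dsimp only
    split <;> positivity
  have hflc : ∀ i : ℤ, f (i-1) * f (i+1) ≤ f i * f i := by
    intro i
    rcases le_or_gt i 0 with hi | hi
    · rw [hf0 (i-1) (by omega), zero_mul]
      exact mul_nonneg (hfnn i) (hfnn i)
    · have h := hPlc i.toNat (by omega)
      rw [hf]
      dsimp only
      rw [if_pos (by omega), if_pos (by omega), if_pos (by omega),
        show (i-1).toNat = i.toNat - 1 from by omega,
        show (i+1).toNat = i.toNat + 1 from by omega]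
      have := h
      rw [pow_two] at this
      exact_mod_cast this
  have hglc : ∀ i : ℤ, g (i-1) * g (i+1) ≤ g i * g i := by
    intro i
    rcases le_or_gt i 0 with hi | hi
    · rw [hg0 (i-1) (by omega), zero_mul]
      exact mul_nonneg (hgnn i) (hgnn i)
    · have h := hQlc i.toNat (by omega)
      rw [hg]
      dsimp only
      rw [if_pos (by omega), if_pos (by omega), if_pos (by omega),
        show (i-1).toNat = i.toNat - 1 from by omega,
        show (i+1).toNat = i.toNat + 1 from by omega]
      have := h
      rw [pow_two] at this
      exact_mod_cast this
  have hfiz : ∀ i : ℤ, 0 ≤ i → f i = 0 → f (i+1) = 0 := by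
    intro i hi h
    rw [hf] at h ⊢
    dsimp only at h ⊢
    rw [if_pos hi] at h
    rw [if_pos (by omega), show (i+1).toNat = i.toNat + 1 from by omega]
    have : layerCard P i.toNat = 0 := by exact_mod_cast h
    rw [layerCard_no_internal_zero i.toNat this]
    simp
  have hgiz : ∀ i : ℤ, 0 ≤ i → g i = 0 → g (i+1) = 0 := by
    intro i hi h
    rw [hg] at h ⊢
    dsimp only at h ⊢
    rw [if_pos hi] at h
    rw [if_pos (by omega), show (i+1).toNat = i.toNat + 1 from by omega]
    have : layerCard Q i.toNat = 0 := by exact_mod_cast h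
    rw [layerCard_no_internal_zero i.toNat this]
    simp
  have hfs := spread_lemma f hf0 hfnn hflc hfiz
  have hgs := spread_lemma g hg0 hgnn hglc hgiz
  have key := conv_lc f g hf0 hg0 hfnn hgnn hfs hgs (n : ℤ)
  -- identify the three sums with layer cards of the product
  have e1 : ∑ k ∈ Ico (-1 : ℤ) ((n:ℤ)+3), f k * g ((n:ℤ)-1-k) = (layerCard (P × Q) (n-1) : ℤ) := by
    rw [← layer_sum_eq (P := P) (Q := Q) (n-1) ((n:ℤ)+3) (by omega)]
    apply Finset.sum_congr rfl
    intro k _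
    rw [hf, hg]
    dsimp only
    rw [show (((n-1 : ℕ)) : ℤ) = (n : ℤ) - 1 from by omega]
  have e2 : ∑ k ∈ Ico (-1 : ℤ) ((n:ℤ)+3), f k * g ((n:ℤ)-k) = (layerCard (P × Q) n : ℤ) := by
    rw [← layer_sum_eq (P := P) (Q := Q) n ((n:ℤ)+3) (by omega)]
  have e3 : ∑ k ∈ Ico (-1 : ℤ) ((n:ℤ)+3), f k * g ((n:ℤ)+1-k) = (layerCard (P × Q) (n+1) : ℤ) := by
    rw [← layer_sum_eq (P := P) (Q := Q) (n+1) ((n:ℤ)+3) (by omega)]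
    apply Finset.sum_congr rfl
    intro k _
    rw [hf, hg]
    dsimp only
    rw [show (((n+1 : ℕ)) : ℤ) = (n : ℤ) + 1 from by omega]
  rw [e1, e2, e3] at key
  exact_mod_cast key

end Aux
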